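/- There exists an instance showing α-GMMS does not imply (α+ε)-PMMS: for every α ∈ (0,1) and ε > 0, there exist two disjoint bundles A_1, A_2 and a nonnegative additive valuation v such that v(A_1) ≥ α · μ(2, A_1 ∪ A_2) but v(A_1) < (α + ε) · μ(2, A_1 ∪ A_2). Concretely, with A_1 consisting of 2k goods of value α/(2k) each and A_2 consisting of 2k goods of value (2−α)/(2k) each, one has μ(2, A_1 ∪ A_2) = 1 and v(A_1) = α, provided k is chosen so that bundles can be balanced (e.g., any k ≥ 1 works since each side can be split evenly). -/

import Mathlib

open Finset

variable {G : Type*} [DecidableEq G]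

/-- `P : Fin n → Finset G` is a partition of `S` into `n` (possibly empty) bundles. -/
def IsPartition {G : Type*} [DecidableEq G] {n : ℕ} (P : Fin n → Finset G) (S : Finset G) : Prop :=
  (∀ i j : Fin n, i ≠ j → Disjoint (P i) (P j)) ∧ Finset.univ.biUnion P = S

/-- The `n`-maximin share of valuation `v` on the set of goods `S`:
the maximum over partitions of `S` into `n` bundles of the minimum bundle value. -/
noncomputable def mms {G : Type*} [DecidableEq G] (v : G → ℝ) (n : ℕ) (S : Finset G) : ℝ :=
  sSup ((fun P : Fin n → Finset G => ⨅ i, (P i).sum v) '' {P | IsPartition P S})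

theorem stmt15 (α ε : ℝ) (hα0 : 0 < α) (hα1 : α < 1) (hε : 0 < ε) :
    ∃ (A₁ A₂ : Finset ℕ) (v : ℕ → ℝ),
      Disjoint A₁ A₂ ∧ (∀ g, 0 ≤ v g) ∧
      α * mms v 2 (A₁ ∪ A₂) ≤ A₁.sum v ∧
      A₁.sum v < (α + ε) * mms v 2 (A₁ ∪ A₂) := by
  set v : ℕ → ℝ := fun g => if g < 2 then α / 2 else (2 - α) / 2 with hv
  have hv0 : v 0 = α / 2 := by simp [hv]
  have hv1 : v 1 = α / 2 := by simp [hv]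
  have hv2 : v 2 = (2 - α) / 2 := by simp [hv]
  have hv3 : v 3 = (2 - α) / 2 := by simp [hv]
  have hS : ({0, 1} ∪ {2, 3} : Finset ℕ) = {0, 1, 2, 3} := by decide
  have hsum : ({0, 1, 2, 3} : Finset ℕ).sum v = 2 := by
    simp [Finset.sum_insert, hv0, hv1, hv2, hv3]; ring
  have hub : ∀ x ∈ (fun P : Fin 2 → Finset ℕ => ⨅ i, (P i).sum v) ''
      {P | IsPartition P ({0, 1, 2, 3} : Finset ℕ)}, x ≤ 1 := by
    rintro x ⟨P, hP, rfl⟩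
    have hunion : (P 0).sum v + (P 1).sum v = 2 := by
      rw [← hsum, ← hP.2,
        show (Finset.univ : Finset (Fin 2)) = {0, 1} from by decide,
        Finset.sum_biUnion]
      · simp [hv]
      · intro i _ j _ hij
        exact hP.1 i j hij
    have h0 : (⨅ i, (P i).sum v) ≤ (P 0).sum v := ciInf_le (Finite.bddBelow_range _) 0
    have h1 : (⨅ i, (P i).sum v) ≤ (P 1).sum v := ciInf_le (Finite.bddBelow_range _) 1
    simp only at h0 h1 ⊢
    linarith
  have hmem : (1 : ℝ) ∈ (fun P : Fin 2 → Finset ℕ => ⨅ i, (P i).sum v) ''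
      {P | IsPartition P ({0, 1, 2, 3} : Finset ℕ)} := by
    refine ⟨fun i => if i = 0 then {0, 2} else {1, 3}, ⟨?_, ?_⟩, ?_⟩
    · intro i j hij
      fin_cases i <;> fin_cases j <;> simp_all
    · decide
    · have hc : ∀ i : Fin 2, ((if i = 0 then ({0, 2} : Finset ℕ) else {1, 3})).sum v = 1 := by
        intro i
        fin_cases i <;> · simp [hv0, hv1, hv2, hv3]; ring
      simp only [hc]
      exact ciInf_const
  have hmms : mms v 2 ({0, 1} ∪ {2, 3}) = 1 := by
    rw [mms, hS]
    exact le_antisymm (csSup_le ⟨1, hmem⟩ hub) (le_csSup ⟨1, hub⟩ hmem)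
  have hA1 : ({0, 1} : Finset ℕ).sum v = α := by
    simp [hv0, hv1]; try ring
  refine ⟨{0, 1}, {2, 3}, v, by decide, ?_, ?_, ?_⟩
  · intro g; simp only [hv]; split <;> linarith
  · rw [hmms, hA1]; linarith
  · rw [hmms, hA1]; linarith
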